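/- The block inequality for inverses: for positive definite operators A, B, the block operator [[(A+B)^{−1}, (A+B)^{−1}],[(A+B)^{−1}, (A+B)^{−1}]] is ≤ [[A^{−1}, 0],[0, B^{−1}]] in the Loewner order on H ⊕ H. -/

import Mathlib

open Matrix
open scoped ComplexOrder

/-- Block inequality for inverses: for positive definite `A, B`,
`[[(A+B)⁻¹,(A+B)⁻¹],[(A+B)⁻¹,(A+B)⁻¹]] ≤ [[A⁻¹,0],[0,B⁻¹]]` in the Loewner order. -/
theorem block_inequality_for_inverses {n : ℕ}
    (A B : Matrix (Fin n) (Fin n) ℂ) (hA : A.PosDef) (hB : B.PosDef) :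
    (Matrix.fromBlocks A⁻¹ 0 0 B⁻¹ -
      Matrix.fromBlocks (A + B)⁻¹ (A + B)⁻¹ (A + B)⁻¹ (A + B)⁻¹).PosSemidef := by
  have hC : (A + B).PosDef := hA.add hB
  haveI : Invertible A := A.invertibleOfIsUnitDet ((Matrix.isUnit_iff_isUnit_det _).1 hA.isUnit)
  haveI : Invertible B := B.invertibleOfIsUnitDet ((Matrix.isUnit_iff_isUnit_det _).1 hB.isUnit)
  haveI : Invertible (A + B) := (A+B).invertibleOfIsUnitDet ((Matrix.isUnit_iff_isUnit_det _).1 hC.isUnit)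
  set C := A + B with hCdef
  set K : Matrix (Fin n) (Fin n) ℂ := A⁻¹ + B⁻¹ with hK
  have hKpd : K.PosDef := hA.inv.add hB.inv
  haveI : Invertible K := K.invertibleOfIsUnitDet ((Matrix.isUnit_iff_isUnit_det _).1 hKpd.isUnit)
  have hKps : (Matrix.fromBlocks K 0 0 K : Matrix (Fin n ⊕ Fin n) _ ℂ).PosSemidef := by
    rw [show (Matrix.fromBlocks K 0 0 K : Matrix (Fin n ⊕ Fin n) _ ℂ)
        = Matrix.fromBlocks K 0 (0 : Matrix (Fin n) (Fin n) ℂ)ᴴ K by rw [conjTranspose_zero],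
      PosDef.fromBlocks₁₁ _ _ hKpd]
    simpa using hKpd.posSemidef
  set P : Matrix (Fin n ⊕ Fin n) (Fin n ⊕ Fin n) ℂ :=
    Matrix.fromBlocks (C⁻¹ * B) 0 (-(C⁻¹ * A)) 0 with hP
  have conj : ∀ X : Matrix (Fin n) (Fin n) ℂ, C⁻¹ * (C * X * C) * C⁻¹ = X := by
    intro X
    rw [← Matrix.mul_assoc, ← Matrix.mul_assoc, Matrix.inv_mul_of_invertible, Matrix.one_mul,
      Matrix.mul_assoc, Matrix.mul_inv_of_invertible, Matrix.mul_one]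
  have e11 : C⁻¹ * B * K * (B * C⁻¹) = A⁻¹ - C⁻¹ := by
    have h1 : B * K * B = C * (A⁻¹ - C⁻¹) * C := by
      rw [hK, hCdef]
      simp only [Matrix.mul_add, Matrix.add_mul, Matrix.mul_sub, Matrix.sub_mul,
        Matrix.mul_assoc, Matrix.mul_inv_cancel_left_of_invertible,
        Matrix.inv_mul_cancel_left_of_invertible, Matrix.mul_inv_of_invertible,
        Matrix.inv_mul_of_invertible, Matrix.mul_one, Matrix.one_mul]
      abel
    calc C⁻¹ * B * K * (B * C⁻¹) = C⁻¹ * (B * K * B) * C⁻¹ := by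
          simp only [Matrix.mul_assoc]
      _ = A⁻¹ - C⁻¹ := by rw [h1, conj]
  have e12 : C⁻¹ * B * K * (A * C⁻¹) = C⁻¹ := by
    have h1 : B * K * A = C := by
      rw [hK, hCdef]
      simp only [Matrix.mul_add, Matrix.add_mul, Matrix.mul_assoc,
        Matrix.inv_mul_cancel_left_of_invertible, Matrix.mul_inv_cancel_left_of_invertible]
      simp only [Matrix.inv_mul_of_invertible, Matrix.mul_inv_of_invertible, Matrix.mul_one,
        Matrix.one_mul]
      abel
    calc C⁻¹ * B * K * (A * C⁻¹) = C⁻¹ * (B * K * A) * C⁻¹ := by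
          simp only [Matrix.mul_assoc]
      _ = C⁻¹ := by rw [h1, Matrix.inv_mul_of_invertible, Matrix.one_mul]
  have e21 : C⁻¹ * A * K * (B * C⁻¹) = C⁻¹ := by
    have h1 : A * K * B = C := by
      rw [hK, hCdef]
      simp only [Matrix.mul_add, Matrix.add_mul, Matrix.mul_assoc,
        Matrix.inv_mul_cancel_left_of_invertible, Matrix.mul_inv_cancel_left_of_invertible]
      simp only [Matrix.inv_mul_of_invertible, Matrix.mul_inv_of_invertible, Matrix.mul_one,
        Matrix.one_mul]
      abel
    calc C⁻¹ * A * K * (B * C⁻¹) = C⁻¹ * (A * K * B) * C⁻¹ := by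
          simp only [Matrix.mul_assoc]
      _ = C⁻¹ := by rw [h1, Matrix.inv_mul_of_invertible, Matrix.one_mul]
  have e22 : C⁻¹ * A * K * (A * C⁻¹) = B⁻¹ - C⁻¹ := by
    have h1 : A * K * A = C * (B⁻¹ - C⁻¹) * C := by
      rw [hK, hCdef]
      simp only [Matrix.mul_add, Matrix.add_mul, Matrix.mul_sub, Matrix.sub_mul,
        Matrix.mul_assoc, Matrix.mul_inv_cancel_left_of_invertible,
        Matrix.inv_mul_cancel_left_of_invertible, Matrix.mul_inv_of_invertible,
        Matrix.inv_mul_of_invertible, Matrix.mul_one, Matrix.one_mul]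
      abel
    calc C⁻¹ * A * K * (A * C⁻¹) = C⁻¹ * (A * K * A) * C⁻¹ := by
          simp only [Matrix.mul_assoc]
      _ = B⁻¹ - C⁻¹ := by rw [h1, conj]
  have key : Matrix.fromBlocks A⁻¹ 0 0 B⁻¹ - Matrix.fromBlocks C⁻¹ C⁻¹ C⁻¹ C⁻¹
      = P * Matrix.fromBlocks K 0 0 K * Pᴴ := by
    have hPH : Pᴴ = Matrix.fromBlocks (B * C⁻¹) (-(A * C⁻¹)) 0 0 := by
      simp [hP, Matrix.fromBlocks_conjTranspose, conjTranspose_mul, hB.1.eq, hA.1.eq,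
        hC.inv.1.eq]
    rw [hPH, hP, Matrix.fromBlocks_multiply, Matrix.fromBlocks_multiply]
    simp only [Matrix.mul_zero, Matrix.zero_mul, add_zero, zero_add, Matrix.mul_neg,
      Matrix.neg_mul, neg_neg]
    rw [sub_eq_iff_eq_add, Matrix.fromBlocks_add]
    rw [e11, e12, e21, e22, sub_add_cancel, sub_add_cancel, neg_add_cancel]
  rw [key]
  exact hKps.mul_mul_conjTranspose_same P
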